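/- The rounded dynamic program dominates the exact one: for λ > 0 and rounding r(x) = ⌈x/λ⌉·λ, defining D̄ by the recurrence D̄(i,ℓ,L) = min_j { D̄(j,ℓ+1, L − r(P_{2i−j})) + q̂_{ℓ+1}·P_{2i−j} } over valid j with L − r(P_{2i−j}) ≥ 0, and base case D̄(0,ℓ,L) = 0, one has D(i,ℓ,L) ≥ D̄(i, ℓ, r(L) + (h−ℓ)·λ) for all valid i, ℓ ∈ [0,h], L ≥ 0. -/

import Mathlib

/-- The exact dynamic program `D(i, ℓ, L)`: minimum decode time over all forests rooted at
level `ℓ` (levels bounded by `h`) having exactly `i` internal nodes and code length at most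
`L`, defined by the recurrence
`D(i,ℓ,L) = min_{j ∈ [max(0,2i−n), i−1], P_{2i−j} ≤ L} D(j, ℓ+1, L − P_{2i−j}) + q̂_{ℓ+1}·P_{2i−j}`
with base case `D(0,ℓ,L) = 0` (value `⊤` when infeasible). -/
noncomputable def dpD (P qhat : ℕ → ℕ) (n h : ℕ) : ℕ → ℕ → ℕ → ℕ∞
  | 0, _, _ => 0
  | (i + 1), ℓ, L =>
    if h ≤ ℓ then ⊤
    else (Finset.Icc (2 * (i + 1) - n) i).attach.inf fun j =>
      if P (2 * (i + 1) - j.1) ≤ L then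
        dpD P qhat n h j.1 (ℓ + 1) (L - P (2 * (i + 1) - j.1)) +
          (↑(qhat (ℓ + 1) * P (2 * (i + 1) - j.1)) : ℕ∞)
      else ⊤
termination_by i _ _ => i
decreasing_by
  have hj := j.2
  simp only [Finset.mem_Icc] at hj
  omega

/-- Rounding to the next multiple of `lam`: `r(x) = ⌈x / λ⌉·λ`. -/
def rnd (lam x : ℕ) : ℕ := ((x + lam - 1) / lam) * lam

/-- The rounded dynamic program `D̄(i, ℓ, L)`, defined by the recurrence
`D̄(i,ℓ,L) = min_j { D̄(j, ℓ+1, L − r(P_{2i−j})) + q̂_{ℓ+1}·P_{2i−j} }` over valid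
`j ∈ [max(0,2i−n), i−1]` with `L − r(P_{2i−j}) ≥ 0`, and base case `D̄(0,ℓ,L) = 0`. -/
noncomputable def dpDbar (P qhat : ℕ → ℕ) (lam n h : ℕ) : ℕ → ℕ → ℕ → ℕ∞
  | 0, _, _ => 0
  | (i + 1), ℓ, L =>
    if h ≤ ℓ then ⊤
    else (Finset.Icc (2 * (i + 1) - n) i).attach.inf fun j =>
      if rnd lam (P (2 * (i + 1) - j.1)) ≤ L then
        dpDbar P qhat lam n h j.1 (ℓ + 1) (L - rnd lam (P (2 * (i + 1) - j.1))) +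
          (↑(qhat (ℓ + 1) * P (2 * (i + 1) - j.1)) : ℕ∞)
      else ⊤
termination_by i _ _ => i
decreasing_by
  have hj := j.2
  simp only [Finset.mem_Icc] at hj
  omega

lemma le_rnd (lam x : ℕ) (h : 0 < lam) : x ≤ rnd lam x := by
  unfold rnd
  rw [Nat.mul_comm]
  have h1 := Nat.div_add_mod (x + lam - 1) lam
  have h2 := Nat.mod_lt (x + lam - 1) h
  omega

lemma rnd_le (lam x : ℕ) : rnd lam x ≤ x + lam - 1 :=
  Nat.div_mul_le_self _ _

lemma rnd_mono (lam : ℕ) {x y : ℕ} (h : x ≤ y) : rnd lam x ≤ rnd lam y :=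
  Nat.mul_le_mul_right _ (Nat.div_le_div_right (by omega))

lemma rnd_key (lam P L : ℕ) (hlam : 0 < lam) (hP : P ≤ L) :
    rnd lam (L - P) + rnd lam P ≤ rnd lam L + lam := by
  have h1 := rnd_le lam (L - P)
  have h2 := rnd_le lam P
  have h3 := le_rnd lam L hlam
  have hlt : rnd lam (L - P) + rnd lam P < rnd lam L + lam + lam := by omega
  unfold rnd at hlt ⊢
  rw [show ((L + lam - 1) / lam) * lam + lam = ((L + lam - 1) / lam + 1) * lam by ring,
    ← Nat.add_mul] at hlt ⊢
  rw [show ((L + lam - 1) / lam + 1) * lam + lam = ((L + lam - 1) / lam + 2) * lam by ring] at hlt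
  exact Nat.mul_le_mul_right _ (by
    have := Nat.lt_of_mul_lt_mul_right hlt
    omega)

lemma dpDbar_mono (P qhat : ℕ → ℕ) (lam n h : ℕ) :
    ∀ (i ℓ L L' : ℕ), L ≤ L' →
      dpDbar P qhat lam n h i ℓ L' ≤ dpDbar P qhat lam n h i ℓ L := by
  intro i
  induction i using Nat.strong_induction_on with
  | _ i IH =>
    intro ℓ L L' hL
    match i with
    | 0 => simp [dpDbar]
    | (i + 1) =>
      rw [dpDbar, dpDbar]
      split
      · exact le_refl _
      · refine Finset.inf_mono_fun fun j hj => ?_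
        have hjle : j.1 ≤ i := by have := j.2; simp only [Finset.mem_Icc] at this; omega
        by_cases hc : rnd lam (P (2 * (i + 1) - j.1)) ≤ L
        · rw [if_pos hc, if_pos (le_trans hc hL)]
          exact add_le_add_left (IH j.1 (by omega) _ _ _ (by omega)) _
        · rw [if_neg hc]; exact le_top

theorem stmt_10 (P qhat : ℕ → ℕ) (lam n h : ℕ) (hlam : 0 < lam) :
    ∀ (i ℓ L : ℕ), ℓ ≤ h →
      dpDbar P qhat lam n h i ℓ (rnd lam L + (h - ℓ) * lam) ≤ dpD P qhat n h i ℓ L := by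
  intro i
  induction i using Nat.strong_induction_on with
  | _ i IH =>
    intro ℓ L hℓ
    match i with
    | 0 => simp [dpDbar, dpD]
    | (i + 1) =>
      rw [dpDbar, dpD]
      split
      · exact le_top
      · next hlt =>
        have hℓh : ℓ < h := by omega
        refine Finset.inf_mono_fun fun j hj => ?_
        have hjle : j.1 ≤ i := by have := j.2; simp only [Finset.mem_Icc] at this; omega
        set Pk := P (2 * (i + 1) - j.1) with hPk
        by_cases hc : Pk ≤ L
        · rw [if_pos hc]
          have hcond : rnd lam Pk ≤ rnd lam L + (h - ℓ) * lam := by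
            have := rnd_mono lam hc; omega
          rw [if_pos hcond]
          refine add_le_add_left ?_ _
          have hkey := rnd_key lam Pk L hlam hc
          have harith : rnd lam (L - Pk) + (h - (ℓ + 1)) * lam ≤
              rnd lam L + (h - ℓ) * lam - rnd lam Pk := by
            have : (h - ℓ) * lam = (h - (ℓ + 1)) * lam + lam := by
              rw [show h - ℓ = (h - (ℓ + 1)) + 1 by omega]; ring
            omega
          exact le_trans (dpDbar_mono P qhat lam n h j.1 (ℓ + 1) _ _ harith)
            (IH j.1 (by omega) (ℓ + 1) (L - Pk) (by omega))
        · rw [if_neg hc]; exact le_top
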